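/- Let G be a finite connected simple graph, let W = (v_0, v_1, …, v_k) be a walk in G whose start vertex v_0 and end vertex v_k are adjacent in G, and suppose some vertex of G is not visited by W. Then there exists a vertex x of G not visited by W and a walk W' in G whose multiset of vertices is exactly the multiset of vertices of W together with one occurrence of x; in particular, every vertex of W occurs in W' exactly as many times as in W, x occurs exactly once in W', and the length of W' exceeds the length of W by one. -/

import Mathlib

open SimpleGraph

private lemma cycle_ext_aux {V : Type*} [DecidableEq V] {G : SimpleGraph V}
    {a b a' b' x : V} (W : G.Walk a b) (W' : G.Walk a' b') (hx : x ∉ W.support)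
    (hms : (↑W'.support : Multiset V) = x ::ₘ (↑W.support : Multiset V)) :
    (↑W'.support : Multiset V) = x ::ₘ (↑W.support : Multiset V) ∧
    (∀ v ∈ W.support, W'.support.count v = W.support.count v) ∧
    W'.support.count x = 1 ∧
    W'.length = W.length + 1 := by
  refine ⟨hms, ?_, ?_, ?_⟩
  · intro v hv
    have hvx : v ≠ x := fun h => hx (h ▸ hv)
    have := congrArg (Multiset.count v) hms
    simpa [List.count_cons, hvx, hvx.symm] using this
  · have := congrArg (Multiset.count x) hms
    have hx0 : W.support.count x = 0 := List.count_eq_zero_of_not_mem hx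
    simpa [hx0] using this
  · have := congrArg Multiset.card hms
    simp only [Multiset.coe_card, Multiset.card_cons] at this
    rw [SimpleGraph.Walk.length_support, SimpleGraph.Walk.length_support] at this
    omega

/-- Cycle extension.  Let `G` be a finite connected simple graph and `W` a walk whose start
and end vertices are adjacent, and suppose some vertex of `G` is not visited by `W`.  Then
there is an unvisited vertex `x` and a walk `W'` whose multiset of vertices is exactly the
multiset of vertices of `W` together with one occurrence of `x`; in particular every vertex of
`W` occurs in `W'` exactly as often as in `W`, `x` occurs exactly once in `W'`, and the length
of `W'` exceeds that of `W` by one. -/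
theorem cycle_extension
    {V : Type*} [Fintype V] [DecidableEq V] (G : SimpleGraph V) (hG : G.Connected)
    {a b : V} (hab : G.Adj a b) (W : G.Walk a b)
    (hmiss : ∃ y : V, y ∉ W.support) :
    ∃ x : V, x ∉ W.support ∧
      ∃ (a' b' : V) (W' : G.Walk a' b'),
        (↑W'.support : Multiset V) = x ::ₘ (↑W.support : Multiset V) ∧
        (∀ v ∈ W.support, W'.support.count v = W.support.count v) ∧
        W'.support.count x = 1 ∧
        W'.length = W.length + 1 := by
  obtain ⟨y, hy⟩ := hmiss
  obtain ⟨p⟩ := hG.preconnected a y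
  obtain ⟨d, -, hdf, hds⟩ := p.exists_boundary_dart {v | v ∈ W.support} W.start_mem_support hy
  set v := d.fst with hvdef
  set x := d.snd with hxdef
  simp only [Set.mem_setOf_eq] at hdf hds
  have hvx : G.Adj v x := d.adj
  by_cases hva : v = a
  · refine ⟨x, hds, x, b, Walk.cons (hva ▸ hvx.symm) W, ?_⟩
    exact cycle_ext_aux W _ hds (by simp)
  · -- split W at v
    set W1 := W.takeUntil v hdf with hW1
    set W2 := W.dropUntil v hdf with hW2
    have hspec : W1.append W2 = W := W.take_spec hdf
    obtain ⟨u, h', R', hR⟩ := Walk.exists_eq_cons_of_ne hva W1.reverse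
    -- W' : walk from x to u
    refine ⟨x, hds, x, u, Walk.cons hvx.symm (W2.append (Walk.cons hab.symm R'.reverse)), ?_⟩
    refine cycle_ext_aux W _ hds ?_
    have hW1s : W1.support = R'.support.reverse ++ [v] := by
      have : W1.reverse.support = v :: R'.support := by rw [hR]; simp
      have h2 := congrArg List.reverse this
      rw [Walk.support_reverse, List.reverse_reverse] at h2
      simp at h2
      simpa using h2
    have hWs : W.support = R'.support.reverse ++ [v] ++ W2.support.tail := by
      rw [← hspec, Walk.support_append, hW1s]
    have hW2s : W2.support = v :: W2.support.tail := Walk.support_eq_cons W2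
    have hW's : (Walk.cons hvx.symm (W2.append (Walk.cons hab.symm R'.reverse))).support
        = x :: (W2.support ++ (R'.reverse).support) := by
      simp [Walk.support_append]
    rw [hW's, hWs, Walk.support_reverse]
    refine Multiset.coe_eq_coe.mpr ?_
    refine List.Perm.cons _ ?_
    have heq : R'.support.reverse ++ [v] ++ W2.support.tail
        = R'.support.reverse ++ W2.support := by rw [hW2s]; simp
    rw [heq]
    exact List.perm_append_comm
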